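/- For every positive integer l, there exists exactly one half-full tree (up to isomorphism) with l leaves. -/

import Mathlib

inductive BTree : Type
  | leaf : BTree
  | node : BTree → BTree → BTree
deriving DecidableEq

namespace BTree

/-- Number of leaves of a binary tree. -/
def leaves : BTree → ℕ
  | leaf => 1
  | node l r => leaves l + leaves r

/-- Depth (height) of a binary tree. -/
def depth : BTree → ℕ
  | leaf => 0
  | node l r => max (depth l) (depth r) + 1

/-- Number of internal (non-leaf) nodes. -/
def internals : BTree → ℕ
  | leaf => 0
  | node l r => internals l + internals r + 1

/-- A complete binary tree: full, with all leaves at the same depth. -/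
def IsComplete : BTree → Prop
  | leaf => True
  | node l r => IsComplete l ∧ IsComplete r ∧ depth l = depth r

/-- A half-full tree (haft): every non-leaf node has two children, and its
left child is the root of a complete subtree containing at least half of the
node's leaf-descendants. -/
def IsHaft : BTree → Prop
  | leaf => True
  | node l r => IsComplete l ∧ leaves r ≤ leaves l ∧ IsHaft r

end BTree

namespace BTree

/-- The complete binary tree of depth `n`. -/
def comp : ℕ → BTree
  | 0 => leaf
  | n + 1 => node (comp n) (comp n)

lemma comp_depth (n : ℕ) : depth (comp n) = n := by
  induction n with
  | zero => rfl
  | succ n ih => simp [comp, depth, ih]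

lemma comp_leaves (n : ℕ) : leaves (comp n) = 2 ^ n := by
  induction n with
  | zero => rfl
  | succ n ih => simp [comp, leaves, ih, pow_succ]; ring

lemma comp_complete (n : ℕ) : IsComplete (comp n) := by
  induction n with
  | zero => trivial
  | succ n ih => exact ⟨ih, ih, rfl⟩

lemma leaves_pos (t : BTree) : 0 < leaves t := by
  induction t with
  | leaf => exact Nat.one_pos
  | node l r ihl ihr => simp [leaves]; omega

lemma complete_eq_comp : ∀ t : BTree, IsComplete t → t = comp (depth t) := by
  intro t ht
  induction t with
  | leaf => rfl
  | node l r ihl ihr =>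
    obtain ⟨hl, hr, hd⟩ := ht
    have h1 := ihl hl
    have h2 := ihr hr
    simp only [depth, hd, max_self, comp]
    rw [← hd] at h2 ⊢
    exact congrArg₂ node h1 h2

lemma complete_leaves (t : BTree) (ht : IsComplete t) : leaves t = 2 ^ depth t := by
  rw [complete_eq_comp t ht, comp_leaves, comp_depth]

lemma complete_unique (s t : BTree) (hs : IsComplete s) (ht : IsComplete t)
    (h : leaves s = leaves t) : s = t := by
  have h1 := complete_leaves s hs
  have h2 := complete_leaves t ht
  have : depth s = depth t := by
    have := h1 ▸ h2 ▸ h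
    exact Nat.pow_right_injective (le_refl 2) this
  rw [complete_eq_comp s hs, complete_eq_comp t ht, this]

lemma haft_unique : ∀ s t : BTree, IsHaft s → IsHaft t → leaves s = leaves t → s = t := by
  intro s
  induction s with
  | leaf =>
    intro t _ ht h
    cases t with
    | leaf => rfl
    | node l r =>
      exfalso
      have hl := leaves_pos l
      have hr := leaves_pos r
      simp [leaves] at h
      omega
  | node l1 r1 ihl ihr =>
    intro t hs ht h
    cases t with
    | leaf =>
      exfalso
      have hl := leaves_pos l1
      have hr := leaves_pos r1
      simp [leaves] at h
      omega
    | node l2 r2 =>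
      obtain ⟨hc1, hle1, hh1⟩ := hs
      obtain ⟨hc2, hle2, hh2⟩ := ht
      have e1 := complete_leaves l1 hc1
      have e2 := complete_leaves l2 hc2
      have hr1 := leaves_pos r1
      have hr2 := leaves_pos r2
      simp only [leaves] at h
      -- depths must be equal
      have hdep : depth l1 = depth l2 := by
        by_contra hne
        rcases Nat.lt_or_ge (depth l1) (depth l2) with hlt | hge
        · have : 2 ^ (depth l1 + 1) ≤ 2 ^ depth l2 :=
            Nat.pow_le_pow_right (by norm_num) hlt
          have hp : 2 ^ (depth l1 + 1) = 2 * 2 ^ depth l1 := by rw [pow_succ]; ring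
          omega
        · have hlt2 : depth l2 < depth l1 := lt_of_le_of_ne hge (Ne.symm hne)
          have : 2 ^ (depth l2 + 1) ≤ 2 ^ depth l1 :=
            Nat.pow_le_pow_right (by norm_num) hlt2
          have hp : 2 ^ (depth l2 + 1) = 2 * 2 ^ depth l2 := by rw [pow_succ]; ring
          omega
      have hll : leaves l1 = leaves l2 := by rw [e1, e2, hdep]
      have hleq : l1 = l2 := complete_unique l1 l2 hc1 hc2 hll
      have hrr : leaves r1 = leaves r2 := by omega
      have hreq : r1 = r2 := ihr r2 hh1 hh2 hrr
      rw [hleq, hreq]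

lemma haft_exists : ∀ l : ℕ, 0 < l → ∃ t : BTree, IsHaft t ∧ leaves t = l := by
  intro l
  induction l using Nat.strong_induction_on with
  | _ l ih =>
    intro hl
    rcases eq_or_lt_of_le (Nat.succ_le_of_lt hl) with h1 | h2
    · exact ⟨leaf, trivial, h1⟩
    · -- l ≥ 2
      set k := Nat.log 2 (l - 1) with hk
      have hk1 : 2 ^ k ≤ l - 1 := Nat.pow_log_le_self 2 (by omega)
      have hk2 : l - 1 < 2 ^ (k + 1) := Nat.lt_pow_succ_log_self (by norm_num) _
      have hp : 2 ^ (k + 1) = 2 * 2 ^ k := by rw [pow_succ]; ring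
      obtain ⟨r, hr, hrl⟩ := ih (l - 2 ^ k) (by have := Nat.one_le_two_pow (n := k); omega)
        (by omega)
      refine ⟨node (comp k) r, ⟨comp_complete k, ?_, hr⟩, ?_⟩
      · rw [hrl, comp_leaves]; omega
      · simp only [leaves, comp_leaves, hrl]; omega

end BTree

/-- For every positive integer `l` there is exactly one half-full tree with `l` leaves. -/
theorem haft_exists_unique (l : ℕ) (hl : 0 < l) :
    ∃! t : BTree, BTree.IsHaft t ∧ BTree.leaves t = l := by
  obtain ⟨t, ht, htl⟩ := BTree.haft_exists l hl
  exact ⟨t, ⟨ht, htl⟩, fun s ⟨hs, hsl⟩ => BTree.haft_unique s t hs ht (by rw [hsl, htl])⟩
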